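/- arXiv:2602.11542 — 2 statements merged into one kernel-verified Lean document; each statement's English description precedes it below -/
import Mathlib

section
/- Let β, λ > 0 and f(S, θ, P) = P - S(1 + β(θ - λS)²). The system f = 0, ∂f/∂S = 0, ∂²f/∂S² = 0 has the unique solution S = 2/(λ√(3β)), θ = √(3/β), P = 8/(3λ√(3β)) among (S, θ, P) ∈ ℝ × (0,∞) × ℝ with θ > 0. -/
set_option maxHeartbeats 1000000

private lemma cubic_hasDerivAt (a b c d x : ℝ) :
    HasDerivAt (fun x : ℝ => a * x ^ 3 + b * x ^ 2 + c * x + d)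
      (3 * a * x ^ 2 + 2 * b * x + c) x := by
  have h3 : HasDerivAt (fun x : ℝ => x ^ 3) (3 * x ^ 2) x := by
    simpa using hasDerivAt_pow 3 x
  have h2 : HasDerivAt (fun x : ℝ => x ^ 2) (2 * x) x := by
    simpa using hasDerivAt_pow 2 x
  have h := (((h3.const_mul a).add (h2.const_mul b)).add
      ((hasDerivAt_id x).const_mul c)).add_const d
  exact h.congr_deriv (by ring)

theorem stmt_9 (β lam : ℝ) (hβ : 0 < β) (hlam : 0 < lam) (S θ P : ℝ) (hθ : 0 < θ) :
    (P - S * (1 + β * (θ - lam * S) ^ 2) = 0 ∧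
       deriv (fun S : ℝ => P - S * (1 + β * (θ - lam * S) ^ 2)) S = 0 ∧
       deriv (deriv (fun S : ℝ => P - S * (1 + β * (θ - lam * S) ^ 2))) S = 0) ↔
      (S = 2 / (lam * Real.sqrt (3 * β)) ∧ θ = Real.sqrt (3 / β) ∧
        P = 8 / (3 * lam * Real.sqrt (3 * β))) := by
  have hrw : (fun S : ℝ => P - S * (1 + β * (θ - lam * S) ^ 2)) =
      fun x : ℝ => (-(β * lam ^ 2)) * x ^ 3 + (2 * β * lam * θ) * x ^ 2 +
        (-(1 + β * θ ^ 2)) * x + P := by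
    funext x; ring
  have hd1 : deriv (fun S : ℝ => P - S * (1 + β * (θ - lam * S) ^ 2)) =
      fun x : ℝ => 3 * (-(β * lam ^ 2)) * x ^ 2 + 2 * (2 * β * lam * θ) * x +
        (-(1 + β * θ ^ 2)) := by
    funext x
    rw [hrw]
    exact (cubic_hasDerivAt _ _ _ _ x).deriv
  have hd2 : deriv (deriv (fun S : ℝ => P - S * (1 + β * (θ - lam * S) ^ 2))) S =
      2 * (3 * (-(β * lam ^ 2))) * S + 2 * (2 * β * lam * θ) := by
    rw [hd1]
    have h0 : (fun x : ℝ => 3 * (-(β * lam ^ 2)) * x ^ 2 + 2 * (2 * β * lam * θ) * x +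
        (-(1 + β * θ ^ 2))) = fun x : ℝ => (0 : ℝ) * x ^ 3 +
        (3 * (-(β * lam ^ 2))) * x ^ 2 + (2 * (2 * β * lam * θ)) * x +
        (-(1 + β * θ ^ 2)) := by funext x; ring
    rw [h0]
    rw [(cubic_hasDerivAt 0 (3 * (-(β * lam ^ 2))) (2 * (2 * β * lam * θ))
        (-(1 + β * θ ^ 2)) S).deriv]
    ring
  set r := Real.sqrt (3 * β) with hrdef
  have hr2 : r ^ 2 = 3 * β := Real.sq_sqrt (by positivity)
  have hr0 : 0 < r := Real.sqrt_pos.mpr (by positivity)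
  have hr0' : r ≠ 0 := hr0.ne'
  have hsqrt : Real.sqrt (3 / β) = 3 / r := by
    rw [show (3 : ℝ) / β = (3 / r) ^ 2 by
      field_simp
      nlinarith [hr2]]
    exact Real.sqrt_sq (by positivity)
  rw [hd2, hd1, hsqrt]
  constructor
  · rintro ⟨hA, hB, hC⟩
    have hB' : 3 * (-(β * lam ^ 2)) * S ^ 2 + 2 * (2 * β * lam * θ) * S +
        (-(1 + β * θ ^ 2)) = 0 := hB
    have hfac : (4 * β * lam) * (θ - 3 / 2 * lam * S) = 0 := by linear_combination hC
    have h4 : (4 * β * lam) ≠ 0 := by positivity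
    have hθS : θ = 3 / 2 * lam * S := by
      have := (mul_eq_zero.mp hfac).resolve_left h4
      linarith
    have hSpos : 0 < S := by nlinarith [hθ, hθS]
    rw [hθS] at hB'
    have hS2 : β * lam ^ 2 * S ^ 2 = 4 / 3 := by linear_combination (4 / 3 : ℝ) * hB'
    have hkey : lam * r * S = 2 := by
      have hsq : (lam * r * S) ^ 2 = 4 := by nlinarith [hr2, hS2]
      nlinarith [mul_pos (mul_pos hlam hr0) hSpos, hsq]
    have hSval : S = 2 / (lam * r) := by
      field_simp
      linarith [hkey]
    have hθr : θ = 3 / r := by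
      rw [hθS, hSval]; field_simp
    refine ⟨hSval, hθr, ?_⟩
    have hP : P = S * (1 + β * (θ - lam * S) ^ 2) := by linarith [hA]
    have hdiff : θ - lam * S = 1 / r := by
      rw [hθr, hSval]; field_simp; ring
    have hb3 : β * (1 / r) ^ 2 = 1 / 3 := by
      field_simp
      linarith [hr2]
    rw [hP, hdiff, hb3, hSval]
    ring
  · rintro ⟨hS, hθ', hP⟩
    have hdiff : θ - lam * S = 1 / r := by
      rw [hθ', hS]; field_simp; ring
    have hb3 : β * (1 / r) ^ 2 = 1 / 3 := by
      field_simp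
      linarith [hr2]
    have hbθ : β * θ ^ 2 = 3 := by
      rw [hθ']
      field_simp
      linarith [hr2]
    refine ⟨?_, ?_, ?_⟩
    · rw [hdiff, hb3, hS, hP]; ring
    · show 3 * (-(β * lam ^ 2)) * S ^ 2 + 2 * (2 * β * lam * θ) * S +
          (-(1 + β * θ ^ 2)) = 0
      have h1 : β * lam ^ 2 * S ^ 2 = 4 / 3 := by
        rw [hS]
        field_simp
        linear_combination (-4) * hr2
      have h2 : β * lam * θ * S = 2 := by
        rw [hS, hθ']
        field_simp
        linear_combination (-1) * hr2
      linear_combination -3 * h1 + 4 * h2 - hbθ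
    · have h3 : β * lam ^ 2 * S = 2 / 3 * (β * lam * θ) := by
        rw [hS, hθ']
        field_simp
      linear_combination -6 * h3
end

section
/- Let β, λ > 0 and f(S, θ, P) = P - S(1 + β(θ - λS)²). If θ² < 3/β, then for every P the function S ↦ f(S, θ, P) is strictly decreasing on ℝ, so the model has a unique equilibrium and no bistability. -/
theorem stmt_19 (β lam : ℝ) (hβ : 0 < β) (hlam : 0 < lam) (θ : ℝ) (hθ : θ ^ 2 < 3 / β) :
    ∀ P : ℝ,
      StrictAnti (fun S : ℝ => P - S * (1 + β * (θ - lam * S) ^ 2)) ∧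
        ∃! S : ℝ, P - S * (1 + β * (θ - lam * S) ^ 2) = 0 := by
  intro P
  have hθβ : β * θ ^ 2 < 3 := by
    have := (lt_div_iff₀ hβ).mp hθ
    linarith
  have hanti : StrictAnti (fun S : ℝ => P - S * (1 + β * (θ - lam * S) ^ 2)) := by
    apply strictAnti_of_hasDerivAt_neg
      (f' := fun S => -(1 + β * θ ^ 2 - 4 * β * lam * θ * S + 3 * β * lam ^ 2 * S ^ 2))
    · intro x
      have h1 := HasDerivAt.const_sub P ((hasDerivAt_id x).mul
          (((((hasDerivAt_const x θ).sub ((hasDerivAt_const x lam).mul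
            (hasDerivAt_id x))).pow 2).const_mul β).const_add 1))
      refine h1.congr_deriv ?_
      push_cast
      simp only [Pi.pow_apply, Pi.sub_apply, Pi.mul_apply, id]
      ring
    · intro x
      have key : 1 + β * θ ^ 2 - 4 * β * lam * θ * x + 3 * β * lam ^ 2 * x ^ 2
          = (1 - β * θ ^ 2 / 3) + 3 * β * (lam * x - 2 * θ / 3) ^ 2 := by ring
      have h2 : 0 < (1 - β * θ ^ 2 / 3) + 3 * β * (lam * x - 2 * θ / 3) ^ 2 := by
        have : 0 ≤ 3 * β * (lam * x - 2 * θ / 3) ^ 2 := by positivity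
        nlinarith
      rw [key] at *
      linarith [h2]
  refine ⟨hanti, ?_⟩
  -- existence
  have hcont : Continuous (fun S : ℝ => P - S * (1 + β * (θ - lam * S) ^ 2)) := by
    continuity
  set g := fun S : ℝ => P - S * (1 + β * (θ - lam * S) ^ 2) with hg
  have hga : 0 ≤ g (-|P|) := by
    have h1 : (1:ℝ) ≤ 1 + β * (θ - lam * (-|P|)) ^ 2 := by
      have := mul_nonneg hβ.le (sq_nonneg (θ - lam * (-|P|))); linarith
    have h2 : (0:ℝ) ≤ |P| := abs_nonneg P
    have h3 : |P| ≤ |P| * (1 + β * (θ - lam * (-|P|)) ^ 2) := le_mul_of_one_le_right h2 h1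
    have := neg_abs_le P
    simp only [hg, neg_mul]
    linarith
  have hgb : g |P| ≤ 0 := by
    have h1 : (1:ℝ) ≤ 1 + β * (θ - lam * |P|) ^ 2 := by
      have := mul_nonneg hβ.le (sq_nonneg (θ - lam * |P|)); linarith
    have h2 : (0:ℝ) ≤ |P| := abs_nonneg P
    have h3 : |P| ≤ |P| * (1 + β * (θ - lam * |P|) ^ 2) := le_mul_of_one_le_right h2 h1
    have := le_abs_self P
    simp only [hg]
    linarith
  have hab : (-|P| : ℝ) ≤ |P| := by
    have := abs_nonneg P; linarith
  have hmem : (0:ℝ) ∈ Set.Icc (g |P|) (g (-|P|)) := ⟨hgb, hga⟩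
  have := intermediate_value_Icc' hab hcont.continuousOn hmem
  obtain ⟨S, _, hS⟩ := this
  exact ⟨S, hS, fun y hy => hanti.injective (hy.trans hS.symm)⟩
end
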